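/- Let n, m ≥ 1 and let ℱ be a set of partial functions from [n] to [m] forming an antichain under extension (no member of ℱ properly extends another). Call a partial function free if it does not extend any member of ℱ. Then the following are equivalent: (A) every free partial function has a free total extension (equivalently, the monomial ideal generated by the graphs of the members of ℱ together with the appropriate functional monomials is the Stanley–Reisner ideal of a class of total functions); (B) for every u ∈ [n] and every subset F ⊆ ℱ all of whose members are defined at u and such that {𝕡f(u) : 𝕡f ∈ F} is all of [m], either there exist 𝕡f, 𝕡g ∈ F and some v ≠ u at which both are defined with 𝕡f(v) ≠ 𝕡g(v), or the union ⋃_{𝕡f ∈ F} 𝕡f|_{dom(𝕡f)∖{u}} is a well-defined (single-valued) partial function that extends some member of ℱ. -/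

import Mathlib

/-- The partial function `pg` extends the partial function `pf`
(partial functions from `Fin n` to `Fin m` are represented as `Fin n → Option (Fin m)`). -/
def PFExtends {n m : ℕ} (pg pf : Fin n → Option (Fin m)) : Prop :=
  ∀ u i, pf u = some i → pg u = some i

/-- A partial function is free (w.r.t. the family `ℱ`) if it does not extend
any member of `ℱ`. -/
def FreePF {n m : ℕ} (ℱ : Set (Fin n → Option (Fin m))) (pf : Fin n → Option (Fin m)) : Prop :=
  ¬ ∃ pg ∈ ℱ, PFExtends pf pg

lemma PFExtends.trans {n m : ℕ} {pf pg ph : Fin n → Option (Fin m)}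
    (h1 : PFExtends pf pg) (h2 : PFExtends pg ph) : PFExtends pf ph :=
  fun u i hi => h1 u i (h2 u i hi)

/-- One-step extension lemma: assuming condition (B), a free partial function
undefined at `u` can be extended at `u` staying free. -/
lemma step_extend {n m : ℕ} (ℱ : Set (Fin n → Option (Fin m)))
    (hB : ∀ u : Fin n, ∀ F ⊆ ℱ,
        (∀ pf ∈ F, pf u ≠ none) →
        (∀ v : Fin m, ∃ pf ∈ F, pf u = some v) →
        ((∃ pf ∈ F, ∃ pg ∈ F, ∃ v : Fin n, v ≠ u ∧
            ∃ a b : Fin m, pf v = some a ∧ pg v = some b ∧ a ≠ b) ∨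
          (∃ pU : Fin n → Option (Fin m),
            (∀ v : Fin n, ∀ a : Fin m,
              pU v = some a ↔ (v ≠ u ∧ ∃ pf ∈ F, pf v = some a)) ∧
            ∃ ph ∈ ℱ, PFExtends pU ph)))
    (pf : Fin n → Option (Fin m)) (hfree : FreePF ℱ pf)
    (u : Fin n) (hu : pf u = none) :
    ∃ v : Fin m, FreePF ℱ (Function.update pf u (some v)) := by
  by_contra h
  push_neg at h
  have h' : ∀ v : Fin m, ∃ pg ∈ ℱ, PFExtends (Function.update pf u (some v)) pg := by
    intro v
    have := h v
    unfold FreePF at this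
    push_neg at this
    obtain ⟨pg, hpg, hext⟩ := this
    exact ⟨pg, hpg, hext⟩
  choose g hg hext using h'
  -- each g v is defined at u (with value v)
  have hgu : ∀ v, g v u = some v := by
    intro v
    cases hgv : g v u with
    | none =>
      exfalso
      apply hfree
      refine ⟨g v, hg v, fun w i hwi => ?_⟩
      have hw : w ≠ u := by rintro rfl; rw [hgv] at hwi; exact Option.some_ne_none _ hwi.symm
      have := hext v w i hwi
      rwa [Function.update_of_ne hw] at this
    | some i =>
      have := hext v u i hgv
      rw [Function.update_self] at this
      exact this.symm
  -- off u, each g v is below pf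
  have hoff : ∀ v w a, w ≠ u → g v w = some a → pf w = some a := by
    intro v w a hw hwa
    have := hext v w a hwa
    rwa [Function.update_of_ne hw] at this
  have hcase := hB u (Set.range g) (by rintro _ ⟨v, rfl⟩; exact hg v)
    (by rintro _ ⟨v, rfl⟩; rw [hgu v]; exact fun h => Option.some_ne_none _ h)
    (fun v => ⟨g v, ⟨v, rfl⟩, hgu v⟩)
  rcases hcase with ⟨_, ⟨v₁, rfl⟩, _, ⟨v₂, rfl⟩, w, hwu, a, b, ha, hb, hab⟩ |
    ⟨pU, hpU, ph, hph, hUh⟩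
  · exact hab (Option.some_injective _ (((hoff v₁ w a hwu ha).symm.trans (hoff v₂ w b hwu hb))))
  · apply hfree
    refine ⟨ph, hph, PFExtends.trans (fun w a hwa => ?_) hUh⟩
    obtain ⟨hwu, _, ⟨v, rfl⟩, hgw⟩ := (hpU w a).mp hwa
    exact hoff v w a hwu hgw

theorem SR_ideal_of_total_class_characterization {n m : ℕ} (hn : 1 ≤ n) (hm : 1 ≤ m)
    (ℱ : Set (Fin n → Option (Fin m)))
    (hanti : ∀ pf ∈ ℱ, ∀ pg ∈ ℱ, PFExtends pf pg → pf = pg) :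
    (∀ pf : Fin n → Option (Fin m), FreePF ℱ pf →
        ∃ f : Fin n → Fin m, PFExtends (fun u => some (f u)) pf ∧
          FreePF ℱ (fun u => some (f u))) ↔
      (∀ u : Fin n, ∀ F ⊆ ℱ,
        (∀ pf ∈ F, pf u ≠ none) →
        (∀ v : Fin m, ∃ pf ∈ F, pf u = some v) →
        ((∃ pf ∈ F, ∃ pg ∈ F, ∃ v : Fin n, v ≠ u ∧
            ∃ a b : Fin m, pf v = some a ∧ pg v = some b ∧ a ≠ b) ∨
          (∃ pU : Fin n → Option (Fin m),
            (∀ v : Fin n, ∀ a : Fin m,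
              pU v = some a ↔ (v ≠ u ∧ ∃ pf ∈ F, pf v = some a)) ∧
            ∃ ph ∈ ℱ, PFExtends pU ph))) := by
  constructor
  · -- (A) → (B)
    intro hA u F hFsub hdef hcover
    by_cases hconf : ∃ pf ∈ F, ∃ pg ∈ F, ∃ v : Fin n, v ≠ u ∧
        ∃ a b : Fin m, pf v = some a ∧ pg v = some b ∧ a ≠ b
    · exact Or.inl hconf
    · right
      push_neg at hconf
      -- define pU
      classical
      set pU : Fin n → Option (Fin m) := fun v =>
        if h : v ≠ u ∧ ∃ a : Fin m, ∃ pf ∈ F, pf v = some a then some h.2.choose else none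
        with hpUdef
      have hspec : ∀ v : Fin n, ∀ a : Fin m,
          pU v = some a ↔ (v ≠ u ∧ ∃ pf ∈ F, pf v = some a) := by
        intro v a
        constructor
        · intro hva
          rw [hpUdef] at hva
          simp only at hva
          split_ifs at hva with h
          obtain ⟨pf, hpf, hpfv⟩ := h.2.choose_spec
          have : h.2.choose = a := Option.some_injective _ hva
          exact ⟨h.1, pf, hpf, this ▸ hpfv⟩
        · rintro ⟨hvu, pf, hpf, hpfv⟩
          have hcond : v ≠ u ∧ ∃ a : Fin m, ∃ pf ∈ F, pf v = some a :=
            ⟨hvu, a, pf, hpf, hpfv⟩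
          rw [hpUdef]
          simp only
          rw [dif_pos hcond]
          obtain ⟨pg, hpg, hpgv⟩ := hcond.2.choose_spec
          have : hcond.2.choose = a :=
            hconf pg hpg pf hpf v hvu hcond.2.choose a hpgv hpfv
          rw [this]
      refine ⟨pU, hspec, ?_⟩
      by_contra hUfree
      -- pU is free; get a free total extension f
      obtain ⟨f, hfext, hffree⟩ := hA pU hUfree
      obtain ⟨pf, hpf, hpfu⟩ := hcover (f u)
      apply hffree
      refine ⟨pf, hFsub hpf, fun w a hwa => ?_⟩
      by_cases hw : w = u
      · subst hw
        rw [hpfu] at hwa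
        exact hwa
      · exact hfext w a ((hspec w a).mpr ⟨hw, pf, hpf, hwa⟩)
  · -- (B) → (A)
    intro hB
    classical
    have key : ∀ k : ℕ, ∀ pf : Fin n → Option (Fin m),
        (Finset.univ.filter (fun u => pf u = none)).card = k → FreePF ℱ pf →
        ∃ f : Fin n → Fin m, PFExtends (fun u => some (f u)) pf ∧
          FreePF ℱ (fun u => some (f u)) := by
      intro k
      induction k with
      | zero =>
        intro pf hcard hfree
        have htot : ∀ u, pf u ≠ none := by
          intro u hu
          have : u ∈ Finset.univ.filter (fun u => pf u = none) := by
            simp [hu]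
          rw [Finset.card_eq_zero] at hcard
          rw [hcard] at this
          exact absurd this (Finset.notMem_empty u)
        refine ⟨fun u => (pf u).get (Option.ne_none_iff_isSome.mp (htot u)), ?_, ?_⟩
        · intro u i hi
          simp [hi]
        · intro ⟨pg, hpg, hext⟩
          apply hfree
          refine ⟨pg, hpg, fun u i hi => ?_⟩
          have := hext u i hi
          simpa using this
      | succ k ih =>
        intro pf hcard hfree
        have hne : (Finset.univ.filter (fun u => pf u = none)).Nonempty := by
          rw [← Finset.card_pos, hcard]; omega
        obtain ⟨u, hu⟩ := hne
        have hu' : pf u = none := by simpa using hu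
        obtain ⟨v, hvfree⟩ := step_extend ℱ hB pf hfree u hu'
        have hcard' : (Finset.univ.filter
            (fun w => Function.update pf u (some v) w = none)).card = k := by
          have : Finset.univ.filter (fun w => Function.update pf u (some v) w = none)
              = (Finset.univ.filter (fun w => pf w = none)).erase u := by
            ext w
            simp only [Finset.mem_filter, Finset.mem_univ, true_and, Finset.mem_erase]
            constructor
            · intro hw
              have hwu : w ≠ u := by
                rintro rfl
                rw [Function.update_self] at hw
                exact Option.some_ne_none _ hw
              rw [Function.update_of_ne hwu] at hw
              exact ⟨hwu, hw⟩
            · rintro ⟨hwu, hw⟩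
              rwa [Function.update_of_ne hwu]
          rw [this, Finset.card_erase_of_mem hu, hcard]
          omega
        obtain ⟨f, hfext, hffree⟩ := ih (Function.update pf u (some v)) hcard' hvfree
        refine ⟨f, ?_, hffree⟩
        refine PFExtends.trans hfext (fun w i hwi => ?_)
        have hwu : w ≠ u := by rintro rfl; rw [hu'] at hwi; exact Option.some_ne_none _ hwi.symm
        rwa [Function.update_of_ne hwu]
    intro pf hfree
    exact key _ pf rfl hfree
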